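/- Let ℓ be a prime and let v_1, ..., v_t be t distinct vectors in F_ℓ^n all of whose coordinates are 0 or 1. Then the dimension of the span of {v_1, ..., v_t} over F_ℓ is at least ⌈log₂ t⌉. -/

import Mathlib

/-- Odlyzko's theorem: t distinct {0,1}-vectors in F_ℓ^n contain ⌈log₂ t⌉ linearly
independent ones, i.e. their span has dimension at least ⌈log₂ t⌉. -/
theorem odlyzko (ℓ n t : ℕ) [Fact ℓ.Prime] (v : Fin t → (Fin n → ZMod ℓ))
    (hinj : Function.Injective v)
    (h01 : ∀ i j, v i j = 0 ∨ v i j = 1) :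
    Nat.clog 2 t ≤ Module.finrank (ZMod ℓ) ↥(Submodule.span (ZMod ℓ) (Set.range v)) := by
  classical
  set W := Submodule.span (ZMod ℓ) (Set.range v) with hW
  have hV : ∀ i, v i ∈ W := fun i => Submodule.subset_span ⟨i, rfl⟩
  set φ : Fin n → Module.Dual (ZMod ℓ) W :=
    fun j => (LinearMap.proj j).comp W.subtype with hφ
  obtain ⟨b, hbsub, hbspan, hbind⟩ := exists_linearIndependent (ZMod ℓ) (Set.range φ)
  have hbfin : b.Finite := hbind.setFinite
  haveI := hbfin.fintype
  have hcard : Fintype.card b ≤ Module.finrank (ZMod ℓ) W := by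
    have h := hbind.fintype_card_le_finrank
    rwa [Subspace.dual_finrank_eq] at h
  set g : Fin t → (b → Bool) := fun i ψ => decide (ψ.1 ⟨v i, hV i⟩ = 1) with hg
  have hginj : Function.Injective g := by
    intro i i' h
    apply hinj
    funext j
    -- every element of b takes the same value on v i and v i'
    have hbagree : ∀ ψ ∈ b, ψ ⟨v i, hV i⟩ = ψ ⟨v i', hV i'⟩ := by
      intro ψ hψ
      obtain ⟨j', rfl⟩ := hbsub hψ
      have hd := congrFun h ⟨_, hψ⟩
      simp only [hg, decide_eq_decide] at hd
      have h1 : φ j' ⟨v i, hV i⟩ = v i j' := rfl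
      have h2 : φ j' ⟨v i', hV i'⟩ = v i' j' := rfl
      rw [h1, h2] at hd ⊢
      rcases h01 i j' with e1 | e1 <;> rcases h01 i' j' with e2 | e2 <;>
        simp [e1, e2] at hd ⊢
    -- hence so does φ j, since φ j ∈ span b
    set ε : Module.Dual (ZMod ℓ) (Module.Dual (ZMod ℓ) W) :=
      Module.Dual.eval (ZMod ℓ) W ⟨v i, hV i⟩ - Module.Dual.eval (ZMod ℓ) W ⟨v i', hV i'⟩ with hε
    have hker : Submodule.span (ZMod ℓ) b ≤ LinearMap.ker ε := by
      rw [Submodule.span_le]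
      intro ψ hψ
      simp only [SetLike.mem_coe, LinearMap.mem_ker, hε, LinearMap.sub_apply,
        Module.Dual.eval_apply, sub_eq_zero]
      exact hbagree ψ hψ
    have hj : φ j ∈ Submodule.span (ZMod ℓ) b := by
      rw [hbspan]; exact Submodule.subset_span ⟨j, rfl⟩
    have := hker hj
    simp only [LinearMap.mem_ker, hε, LinearMap.sub_apply, Module.Dual.eval_apply,
      sub_eq_zero] at this
    exact this
  have ht : t ≤ 2 ^ Fintype.card b := by
    calc t = Fintype.card (Fin t) := (Fintype.card_fin t).symm
    _ ≤ Fintype.card (b → Bool) := Fintype.card_le_of_injective g hginj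
    _ = 2 ^ Fintype.card b := by simp [Fintype.card_fun]
  have : t ≤ 2 ^ Module.finrank (ZMod ℓ) W :=
    ht.trans (Nat.pow_le_pow_right (by norm_num) hcard)
  exact (Nat.clog_le_iff_le_pow (by norm_num)).mpr this
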